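/- Let V be a free Z_p-submodule of Z_p^n. If V admits an orthonormal basis, then every basis of V is orthonormal. -/

import Mathlib

set_option synthInstance.maxHeartbeats 400000
set_option maxHeartbeats 800000

lemma padicInt_coe_sum {p : ℕ} [Fact p.Prime] {ι : Type*} (s : Finset ι) (f : ι → ℤ_[p]) :
    ((∑ i ∈ s, f i : ℤ_[p]) : ℚ_[p]) = ∑ i ∈ s, (f i : ℚ_[p]) :=
  map_sum PadicInt.Coe.ringHom f s

/-- A finite family of vectors in `ℤ_p^n` is orthonormal if each vector has sup-norm `1`
and the norm of any `ℚ_p`-linear combination is the maximum of the norms of the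
coefficients. -/
def IsOrthonormalFam {p : ℕ} [Fact p.Prime] {n : ℕ} {ι : Type*} [Fintype ι]
    (x : ι → Fin n → ℤ_[p]) : Prop :=
  (∀ j, (⨆ i, ‖x j i‖) = 1) ∧
  ∀ lam : ι → ℚ_[p], (⨆ i, ‖∑ j, lam j * (x j i : ℚ_[p])‖) = ⨆ j, ‖lam j‖

/-- if a free `ℤ_p`-submodule of `ℤ_p^n` admits an orthonormal basis,
then every (finite) basis of it is orthonormal. -/
theorem statement3 {p : ℕ} [Fact p.Prime] {n : ℕ}
    (V : Submodule ℤ_[p] (Fin n → ℤ_[p]))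
    {ι₀ : Type*} [Fintype ι₀] (b₀ : Module.Basis ι₀ ℤ_[p] V)
    (hb₀ : IsOrthonormalFam (fun j => (b₀ j : Fin n → ℤ_[p])))
    {ι : Type*} [Fintype ι] (b : Module.Basis ι ℤ_[p] V) :
    IsOrthonormalFam (fun j => (b j : Fin n → ℤ_[p])) := by
  classical
  set M : ι → ι₀ → ℤ_[p] := fun j k => b₀.repr (b j) k with hM
  set N : ι₀ → ι → ℤ_[p] := fun k j => b.repr (b₀ k) j with hN
  -- expansion of b in terms of b₀
  have hbM : ∀ j i, ((b j : Fin n → ℤ_[p]) i : ℚ_[p])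
      = ∑ k, (M j k : ℚ_[p]) * ((b₀ k : Fin n → ℤ_[p]) i : ℚ_[p]) := by
    intro j i
    have h : (b j : V) = ∑ k, M j k • b₀ k := (b₀.sum_repr (b j)).symm
    have h2 : ((b j : Fin n → ℤ_[p]) i) = ∑ k, M j k * (b₀ k : Fin n → ℤ_[p]) i := by
      rw [h]; push_cast [Submodule.coe_sum]; simp [Finset.sum_apply]
    rw [h2, padicInt_coe_sum]; push_cast; ring
  -- delta identity
  have hdelta : ∀ j j', (∑ k, M j k * N k j') = if j = j' then 1 else 0 := by
    intro j j'
    have h : (b j : V) = ∑ k, M j k • b₀ k := (b₀.sum_repr (b j)).symm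
    have h3 : b.repr (b j) = ∑ k, M j k • b.repr (b₀ k) := by
      rw [h, map_sum]; simp only [map_smul]
    have h4 := congrArg (fun f : ι →₀ ℤ_[p] => f j') h3
    simp only [Module.Basis.repr_self, Finsupp.coe_finset_sum, Finset.sum_apply,
      Finsupp.coe_smul, Pi.smul_apply, smul_eq_mul, Finsupp.single_apply] at h4
    rw [← h4]
  -- key: second orthonormality condition for b
  have key : ∀ lam : ι → ℚ_[p],
      (⨆ i, ‖∑ j, lam j * ((b j : Fin n → ℤ_[p]) i : ℚ_[p])‖) = ⨆ j, ‖lam j‖ := by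
    intro lam
    set lam' : ι₀ → ℚ_[p] := fun k => ∑ j, lam j * (M j k : ℚ_[p]) with hlam'
    have hswap : ∀ i, (∑ j, lam j * ((b j : Fin n → ℤ_[p]) i : ℚ_[p]))
        = ∑ k, lam' k * ((b₀ k : Fin n → ℤ_[p]) i : ℚ_[p]) := by
      intro i
      simp only [hbM, Finset.mul_sum, hlam', Finset.sum_mul]
      rw [Finset.sum_comm]
      ring_nf
    have hL : (⨆ i, ‖∑ j, lam j * ((b j : Fin n → ℤ_[p]) i : ℚ_[p])‖) = ⨆ k, ‖lam' k‖ := by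
      simp only [hswap]
      exact hb₀.2 lam'
    rw [hL]
    -- now show ⨆ k, ‖lam' k‖ = ⨆ j, ‖lam j‖
    have hBnn : (0:ℝ) ≤ ⨆ j, ‖lam j‖ := Real.iSup_nonneg fun j => norm_nonneg _
    have hAnn : (0:ℝ) ≤ ⨆ k, ‖lam' k‖ := Real.iSup_nonneg fun k => norm_nonneg _
    have ha : ∀ k, ‖lam' k‖ ≤ ⨆ j, ‖lam j‖ := by
      intro k
      refine IsUltrametricDist.norm_sum_le_of_forall_le_of_nonneg hBnn fun j _ => ?_
      calc ‖lam j * (M j k : ℚ_[p])‖ = ‖lam j‖ * ‖(M j k : ℚ_[p])‖ := norm_mul _ _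
        _ ≤ ‖lam j‖ * 1 := by
            gcongr
            exact (PadicInt.norm_le_one (M j k))
        _ = ‖lam j‖ := mul_one _
        _ ≤ ⨆ j, ‖lam j‖ := le_ciSup (f := fun j => ‖lam j‖) (Set.Finite.bddAbove (Set.finite_range _)) j
    have hb : ∀ j, ‖lam j‖ ≤ ⨆ k, ‖lam' k‖ := by
      intro j'
      have hexp : lam j' = ∑ k, lam' k * (N k j' : ℚ_[p]) := by
        simp only [hlam', Finset.sum_mul, mul_assoc]
        rw [Finset.sum_comm]
        have : ∀ j, ∑ k, lam j * ((M j k : ℚ_[p]) * (N k j' : ℚ_[p]))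
            = lam j * (if j = j' then 1 else 0) := by
          intro j
          rw [← Finset.mul_sum]
          congr 1
          have := hdelta j j'
          calc ∑ k, (M j k : ℚ_[p]) * (N k j' : ℚ_[p])
              = ((∑ k, M j k * N k j' : ℤ_[p]) : ℚ_[p]) := by
                rw [padicInt_coe_sum]; push_cast; ring
            _ = _ := by rw [this]; split <;> simp
        simp [this]
      rw [hexp]
      refine IsUltrametricDist.norm_sum_le_of_forall_le_of_nonneg hAnn fun k _ => ?_
      calc ‖lam' k * (N k j' : ℚ_[p])‖ = ‖lam' k‖ * ‖(N k j' : ℚ_[p])‖ := norm_mul _ _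
        _ ≤ ‖lam' k‖ * 1 := by gcongr; exact PadicInt.norm_le_one (N k j')
        _ = ‖lam' k‖ := mul_one _
        _ ≤ ⨆ k, ‖lam' k‖ := le_ciSup (f := fun k => ‖lam' k‖) (Set.Finite.bddAbove (Set.finite_range _)) k
    exact le_antisymm (Real.iSup_le ha hBnn) (Real.iSup_le hb hAnn)
  constructor
  · intro j
    have := key (fun j' => if j' = j then 1 else 0)
    simp only [ite_mul, one_mul, zero_mul, Finset.sum_ite_eq', Finset.mem_univ, if_true] at this
    have hr : (⨆ j' : ι, ‖(if j' = j then (1:ℚ_[p]) else 0)‖) = 1 := by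
      apply le_antisymm
      · refine Real.iSup_le (fun j' => ?_) zero_le_one
        split <;> simp
      · calc (1:ℝ) = ‖(if j = j then (1:ℚ_[p]) else 0)‖ := by simp
          _ ≤ _ := le_ciSup (f := fun j' => ‖(if j' = j then (1:ℚ_[p]) else 0)‖) (Set.Finite.bddAbove (Set.finite_range _)) j
    rw [hr] at this
    rw [← this]
    rfl
  · exact key
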